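/- If 0 < −α < −β − 1, and moreover −β − 1 ≤ −2α and β − α > −2 (equivalently −a ≥ a − b − c and −b − c < −a + c), then the vector −(2a − c, 2c)ᵀ is a periodic point of Φ, i.e., −(2a − c, 2c)ᵀ ∈ 𝒜_Φ. -/

import Mathlib

open Matrix Polynomial

noncomputable section

/-- `ℤ²[A]`: the smallest `A`-invariant `ℤ`-module containing `ℤ²`. -/
def intSpan {n : ℕ} (A : Matrix (Fin n) (Fin n) ℚ) : Set (Fin n → ℚ) :=
  {x | ∃ (k : ℕ) (v : ℕ → Fin n → ℤ),
    x = ∑ j ∈ Finset.range (k + 1), (A ^ j).mulVec (fun i => ((v j i : ℚ)))}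

/-- The digit vector `(ν, 0)ᵀ`. -/
def digitVec (ν : ℤ) : Fin 2 → ℚ := ![(ν : ℚ), 0]


lemma sum_mulVec {ι : Type*} (s : Finset ι) (f : ι → Matrix (Fin 2) (Fin 2) ℚ)
    (v : Fin 2 → ℚ) : (∑ i ∈ s, f i).mulVec v = ∑ i ∈ s, (f i).mulVec v :=
  map_sum (AddMonoidHom.mk' (fun M : Matrix (Fin 2) (Fin 2) ℚ => M.mulVec v)
    (fun M N => Matrix.add_mulVec M N v)) f s

lemma mulVec_sumv {ι : Type*} (s : Finset ι) (A : Matrix (Fin 2) (Fin 2) ℚ)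
    (f : ι → Fin 2 → ℚ) : A.mulVec (∑ i ∈ s, f i) = ∑ i ∈ s, A.mulVec (f i) := by
  rw [← Matrix.mulVecLin_apply, map_sum]; simp [Matrix.mulVecLin_apply]

lemma cast_mem_intSpan (A : Matrix (Fin 2) (Fin 2) ℚ) (w : Fin 2 → ℤ) :
    (fun i => ((w i : ℚ))) ∈ intSpan A := by
  exact ⟨0, fun _ => w, by simp; funext i; fin_cases i <;> rfl⟩

lemma cast_sub_mem_intSpan (A : Matrix (Fin 2) (Fin 2) ℚ) (w : Fin 2 → ℤ) {y : Fin 2 → ℚ}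
    (hy : y ∈ intSpan A) : ((fun i => ((w i : ℚ))) - y) ∈ intSpan A := by
  obtain ⟨k, v, rfl⟩ := hy
  refine ⟨k, fun j => (if j = 0 then w else 0) - v j, ?_⟩
  have hcast : ∀ j, (fun i => ((((if j = 0 then w else 0) - v j) i : ℤ) : ℚ)) =
      (fun i => (((if j = 0 then w else (0 : Fin 2 → ℤ)) i : ℤ) : ℚ)) -
        (fun i => ((v j i : ℚ))) := by
    intro j; funext i; simp [Pi.sub_apply]
  simp only [hcast, Matrix.mulVec_sub, Finset.sum_sub_distrib]
  congr 1
  rw [Finset.sum_eq_single 0]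
  · simp
  · intro j hj hne
    have : (fun i => (((if j = 0 then w else (0 : Fin 2 → ℤ)) i : ℤ) : ℚ)) = 0 := by
      funext i; simp [hne]
    rw [this, Matrix.mulVec_zero]
  · simp

lemma key_dvd (α β : ℚ) (a b c : ℤ) (hc0 : (c : ℚ) ≠ 0)
    (ha : (a : ℚ) = (c : ℚ) * α) (hb : (b : ℚ) = (c : ℚ) * β)
    (hprim : Int.gcd c (Int.gcd a b) = 1)
    (A : Matrix (Fin 2) (Fin 2) ℚ) (hA : A = !![0, -β; 1, -α])
    (m : ℤ) {y : Fin 2 → ℚ} (hy : y ∈ intSpan A)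
    (hAy : A.mulVec y = digitVec m) : b ∣ m := by
  obtain ⟨k, v, rfl⟩ := hy
  set w : ℕ → (Fin 2 → ℚ) := fun n => (A ^ n).mulVec ![1, 0] with hw
  have hw0 : w 0 = ![1, 0] := by simp [hw]
  have hw1 : w 1 = ![0, 1] := by
    funext i; fin_cases i <;>
      simp [hw, hA, Matrix.mulVec, dotProduct, Fin.sum_univ_two]
  have hwadd : ∀ n u, (A ^ n).mulVec (w u) = w (n + u) := by
    intro n u
    simp only [hw, Matrix.mulVec_mulVec, ← pow_add]
  have hAw : ∀ u, A.mulVec (w u) = w (u + 1) := by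
    intro u
    have := hwadd 1 u
    rw [pow_one, Nat.add_comm 1 u] at this
    exact this
  have hmono : ∀ (t : ℚ) (n : ℕ), ((aeval A (C t * X ^ n)).mulVec ![1, 0]) = t • w n := by
    intro t n
    rw [_root_.map_mul, aeval_C, aeval_X_pow, Algebra.algebraMap_eq_smul_one, Matrix.smul_mul,
      one_mul, Matrix.smul_mulVec]
  have hcastw : ∀ j, (fun i => ((v j i : ℚ))) = (v j 0 : ℚ) • w 0 + (v j 1 : ℚ) • w 1 := by
    intro j; funext i; fin_cases i <;> simp [hw0, hw1]
  have hrel : (m : ℚ) • w 0 =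
      ∑ j ∈ Finset.range (k + 1), ((v j 0 : ℚ) • w (j + 1) + (v j 1 : ℚ) • w (j + 2)) := by
    have hdig : digitVec m = (m : ℚ) • w 0 := by
      funext i; fin_cases i <;> simp [digitVec, hw0]
    rw [← hdig, ← hAy, mulVec_sumv]
    refine Finset.sum_congr rfl fun j _ => ?_
    rw [hcastw j]
    simp only [Matrix.mulVec_add, Matrix.mulVec_smul, hwadd, hAw]
    
  set f : ℤ[X] := (∑ j ∈ Finset.range (k + 1),
      (C (v j 0) * X ^ (j + 1) + C (v j 1) * X ^ (j + 2))) - C m with hf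
  have hfcoeff0 : f.coeff 0 = -m := by
    rw [hf]
    simp [Polynomial.finset_sum_coeff, Polynomial.coeff_C_mul, Polynomial.coeff_X_pow]
  set f' : ℚ[X] := f.map (Int.castRingHom ℚ) with hf'
  have hΨf' : (aeval A f').mulVec ![1, 0] = 0 := by
    have hmap : f' = (∑ j ∈ Finset.range (k + 1),
        (C ((v j 0 : ℚ)) * X ^ (j + 1) + C ((v j 1 : ℚ)) * X ^ (j + 2))) - C (m : ℚ) := by
      rw [hf', hf]
      simp [Polynomial.map_sum]
    rw [hmap, map_sub, map_sum, Matrix.sub_mulVec, _root_.sum_mulVec]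
    have heach : ∀ j ∈ Finset.range (k + 1),
        (aeval A (C ((v j 0 : ℚ)) * X ^ (j + 1) + C ((v j 1 : ℚ)) * X ^ (j + 2))).mulVec ![1, 0]
          = (v j 0 : ℚ) • w (j + 1) + (v j 1 : ℚ) • w (j + 2) := by
      intro j _
      rw [map_add, Matrix.add_mulVec, hmono, hmono]
    rw [Finset.sum_congr rfl heach, ← hrel]
    have hCm : (aeval A (C (m : ℚ))).mulVec ![1, 0] = (m : ℚ) • w 0 := by
      have := hmono (m : ℚ) 0
      simpa using this
    rw [hCm, sub_self]
  -- characteristic polynomial kills A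
  set p : ℚ[X] := X ^ 2 + C α * X + C β with hp
  have hpm : p.Monic := by
    rw [hp, add_assoc]
    exact Polynomial.monic_X_pow_add (Polynomial.degree_linear_le.trans_lt (by norm_num))
  have haevalp : aeval A p = 0 := by
    rw [hp]
    simp only [map_add, _root_.map_mul, aeval_X_pow, aeval_C, aeval_X]
    rw [hA]
    ext i j
    fin_cases i <;> fin_cases j <;>
      simp [pow_two, Matrix.mul_apply, Fin.sum_univ_two, Algebra.algebraMap_eq_smul_one,
        Matrix.smul_apply, Matrix.one_apply] <;> ring
  have hdiv : f' = p * (f' /ₘ p) + f' %ₘ p := (Polynomial.modByMonic_add_div f' p).symm.trans (by ring)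
  have hr0 : (aeval A (f' %ₘ p)).mulVec ![1, 0] = 0 := by
    have : (aeval A f').mulVec ![1, 0] =
        (aeval A (p * (f' /ₘ p))).mulVec ![1, 0] + (aeval A (f' %ₘ p)).mulVec ![1, 0] := by
      conv_lhs => rw [hdiv]
      rw [map_add, Matrix.add_mulVec]
    rw [hΨf'] at this
    rw [_root_.map_mul, haevalp, zero_mul, Matrix.zero_mulVec, zero_add] at this
    exact this.symm
  have hdeg : (f' %ₘ p).degree ≤ 1 := by
    have h2 : p.degree = 2 := by
      have : p = C 1 * X ^ 2 + C α * X + C β := by rw [hp]; simp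
      rw [this]
      exact Polynomial.degree_quadratic one_ne_zero
    have := Polynomial.degree_modByMonic_lt f' hpm
    rw [h2] at this
    exact Order.le_of_lt_succ (by exact_mod_cast this)
  have hrform := Polynomial.eq_X_add_C_of_degree_le_one hdeg
  have hrzero : f' %ₘ p = 0 := by
    have hΨr : (aeval A (f' %ₘ p)).mulVec ![1, 0]
        = ((f' %ₘ p).coeff 1) • w 1 + ((f' %ₘ p).coeff 0) • w 0 := by
      conv_lhs => rw [hrform]
      rw [map_add, Matrix.add_mulVec, aeval_C]
      rw [show (aeval A) (C ((f' %ₘ p).coeff 1) * X) = aeval A (C ((f' %ₘ p).coeff 1) * X ^ 1) by norm_num]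
      rw [hmono]
      congr 1
      rw [Algebra.algebraMap_eq_smul_one, Matrix.smul_mulVec, Matrix.one_mulVec, hw0]
    rw [hr0] at hΨr
    have h0 : (0 : Fin 2 → ℚ) 0 = ((f' %ₘ p).coeff 1) • w 1 0 + ((f' %ₘ p).coeff 0) • w 0 0 := by
      rw [hΨr]; rfl
    have h1 : (0 : Fin 2 → ℚ) 1 = ((f' %ₘ p).coeff 1) • w 1 1 + ((f' %ₘ p).coeff 0) • w 0 1 := by
      rw [hΨr]; rfl
    rw [hw0, hw1] at h0 h1
    simp at h0 h1
    rw [hrform, ← h0, ← h1]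
    simp
  have hpdvd : p ∣ f' := by
    refine ⟨f' /ₘ p, ?_⟩
    conv_lhs => rw [hdiv, hrzero]
    rw [add_zero]
  -- Gauss
  set Q : ℤ[X] := C c * X ^ 2 + C a * X + C b with hQ
  have hQcoeff0 : Q.coeff 0 = b := by rw [hQ]; simp
  have hQmap : Q.map (Int.castRingHom ℚ) = C (c : ℚ) * p := by
    rw [hQ, hp]
    simp only [Polynomial.map_add, Polynomial.map_mul, Polynomial.map_pow, Polynomial.map_C,
      Polynomial.map_X, Int.coe_castRingHom]
    push_cast
    rw [ha, hb, C_mul, C_mul]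
    ring
  have hQprim : Q.IsPrimitive := by
    intro r hr
    rw [Polynomial.C_dvd_iff_dvd_coeff] at hr
    have hrc : r ∣ c := by have := hr 2; rwa [show Q.coeff 2 = c by rw [hQ]; simp only [coeff_add, coeff_C_mul, coeff_X_pow, coeff_C, coeff_X]; norm_num] at this
    have hra : r ∣ a := by have := hr 1; rwa [show Q.coeff 1 = a by rw [hQ]; simp only [coeff_add, coeff_C_mul, coeff_X_pow, coeff_C, coeff_X]; norm_num] at this
    have hrb : r ∣ b := by have := hr 0; rwa [hQcoeff0] at this
    have : r ∣ (1 : ℤ) := by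
      have h1 : r ∣ (Int.gcd a b : ℤ) := Int.dvd_coe_gcd hra hrb
      have h2 : r ∣ (Int.gcd c (Int.gcd a b) : ℤ) := Int.dvd_coe_gcd hrc h1
      rwa [hprim] at h2
    exact isUnit_of_dvd_one this
  by_cases hf0 : f = 0
  · have hm : m = 0 := by
      have h := hfcoeff0
      rw [hf0] at h
      simpa using h.symm
    simp [hm]
  · have hd0 : f.content ≠ 0 := fun h => hf0 (Polynomial.content_eq_zero_iff.mp h)
    have hcontQ : ((f.content : ℚ)) ≠ 0 := Int.cast_ne_zero.mpr hd0
    have hfdecomp : f' = C ((f.content : ℚ)) * f.primPart.map (Int.castRingHom ℚ) := by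
      rw [hf']
      conv_lhs => rw [f.eq_C_content_mul_primPart]
      simp [Polynomial.map_mul, Polynomial.map_C, Int.coe_castRingHom]
    have hmapPrim : p ∣ (f.primPart.map (Int.castRingHom ℚ)) := by
      obtain ⟨g, hg⟩ := hpdvd
      refine ⟨C ((f.content : ℚ))⁻¹ * g, ?_⟩
      apply mul_left_cancel₀ (show (C ((f.content : ℚ))) ≠ 0 from Polynomial.C_ne_zero.mpr hcontQ)
      rw [← hfdecomp, hg,
        show C ((f.content : ℚ)) * (p * (C ((f.content : ℚ))⁻¹ * g))
          = (C ((f.content : ℚ)) * C ((f.content : ℚ))⁻¹) * (p * g) from by ring,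
        ← C_mul, mul_inv_cancel₀ hcontQ, C_1, one_mul]
    have hQdvdPrim : Q ∣ f.primPart := by
      rw [Polynomial.IsPrimitive.Int.dvd_iff_map_cast_dvd_map_cast Q f.primPart hQprim, hQmap]
      obtain ⟨g, hg⟩ := hmapPrim
      refine ⟨C ((c : ℚ))⁻¹ * g, ?_⟩
      rw [hg, show C ((c : ℚ)) * p * (C ((c : ℚ))⁻¹ * g)
          = (C ((c : ℚ)) * C ((c : ℚ))⁻¹) * (p * g) from by ring,
        ← C_mul, mul_inv_cancel₀ hc0, C_1, one_mul]
    obtain ⟨h, hh⟩ := hQdvdPrim.trans f.primPart_dvd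
    have hcoeffs : f.coeff 0 = Q.coeff 0 * h.coeff 0 := by rw [hh, Polynomial.mul_coeff_zero]
    rw [hfcoeff0, hQcoeff0] at hcoeffs
    exact ⟨-h.coeff 0, by rw [mul_neg, ← hcoeffs, neg_neg]⟩

/-- if `0 < -α < -β - 1`, `-β - 1 ≤ -2α` and `β - α > -2`, then
`-(2a - c, 2c)ᵀ` is a periodic point of `Φ`, i.e. it belongs to the attractor. -/
theorem stmt8 (α β : ℚ) (hα1 : 0 < -α) (hα2 : -α < -β - 1)
    (hcond1 : -β - 1 ≤ -(2 * α)) (hcond2 : β - α > -2)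
    (hirr : Irreducible (X ^ 2 + C α * X + C β : ℚ[X]))
    (hexp : ∀ z : ℂ, z ^ 2 + (α : ℂ) * z + (β : ℂ) = 0 → 1 < ‖z‖)
    (c a b : ℤ) (hc : 0 < c)
    (ha : (a : ℚ) = (c : ℚ) * α) (hb : (b : ℚ) = (c : ℚ) * β)
    (hprim : Int.gcd c (Int.gcd a b) = 1)
    (A : Matrix (Fin 2) (Fin 2) ℚ) (hA : A = !![0, -β; 1, -α])
    (Φ : (Fin 2 → ℚ) → Fin 2 → ℚ)
    (hΦmem : ∀ x ∈ intSpan A, Φ x ∈ intSpan A)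
    (hΦ : ∀ x ∈ intSpan A, ∃ ν : ℤ, 0 ≤ ν ∧ ν ≤ |b| - 1 ∧
      x = digitVec ν + A.mulVec (Φ x))
     :
    ![((-(2 * a - c) : ℤ) : ℚ), ((-(2 * c) : ℤ) : ℚ)] ∈ intSpan A ∧
    ∃ r : ℕ, 1 ≤ r ∧
      Φ^[r] ![((-(2 * a - c) : ℤ) : ℚ), ((-(2 * c) : ℤ) : ℚ)] =
        ![((-(2 * a - c) : ℤ) : ℚ), ((-(2 * c) : ℤ) : ℚ)] := by
  have hcq : (0 : ℚ) < (c : ℚ) := by exact_mod_cast hc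
  have hc0 : (c : ℚ) ≠ 0 := ne_of_gt hcq
  -- integer inequalities
  have h1q : (b : ℚ) + c < a := by rw [ha, hb]; nlinarith [hα2, hcq]
  have h1 : b + c < a := by exact_mod_cast h1q
  have h2q : 2 * (a : ℚ) ≤ (b : ℚ) + c := by rw [ha, hb]; nlinarith [hcond1, hcq]
  have h2 : 2 * a ≤ b + c := by exact_mod_cast h2q
  have h3q : (b : ℚ) - a > -(2 * c) := by rw [ha, hb]; nlinarith [hcond2, hcq]
  have h3 : b - a > -(2 * c) := by exact_mod_cast h3q
  have hbq : (b : ℚ) < -(c : ℚ) := by rw [hb]; nlinarith [hα1, hα2, hcq]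
  have hbc : b < -c := by exact_mod_cast hbq
  have hbneg : b < 0 := by omega
  have habs : |b| = -b := abs_of_neg hbneg
  have hβ0 : β ≠ 0 := by
    intro h
    rw [h] at hb
    simp at hb
    omega
  -- injectivity of A
  have hAinj : ∀ z : Fin 2 → ℚ, A.mulVec z = 0 → z = 0 := by
    intro z hz
    have h0 := congrFun hz 0
    have h1' := congrFun hz 1
    rw [hA] at h0 h1'
    simp [Matrix.mulVec, dotProduct, Fin.sum_univ_two, Matrix.vecHead, Matrix.vecTail] at h0 h1'
    have hz1 : z 1 = 0 := by
      rcases h0 with h | h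
      · exact absurd h hβ0
      · exact h
    have hz0 : z 0 = 0 := by
      rw [hz1] at h1'
      simpa using h1'
    funext i; fin_cases i <;> simp [hz0, hz1]
  -- the two cycle points
  set x₀ : Fin 2 → ℚ := ![((-(2 * a - c) : ℤ) : ℚ), ((-(2 * c) : ℤ) : ℚ)] with hx₀
  set x₁ : Fin 2 → ℚ := ![((a - 2 * c : ℤ) : ℚ), ((c : ℤ) : ℚ)] with hx₁
  have hx₀cast : (fun i => (((![-(2 * a - c), -(2 * c)] : Fin 2 → ℤ) i : ℤ) : ℚ)) = x₀ := by
    funext i; fin_cases i <;> simp [hx₀]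
  have hx₁cast : (fun i => (((![a - 2 * c, c] : Fin 2 → ℤ) i : ℤ) : ℚ)) = x₁ := by
    funext i; fin_cases i <;> simp [hx₁]
  have mem₀ : x₀ ∈ intSpan A := by rw [← hx₀cast]; exact cast_mem_intSpan A _
  have mem₁ : x₁ ∈ intSpan A := by rw [← hx₁cast]; exact cast_mem_intSpan A _
  have hdigsub : ∀ μ ν : ℤ, digitVec μ - digitVec ν = digitVec (μ - ν) := by
    intro μ ν; funext i; fin_cases i <;> simp [digitVec]
  -- the two explicit digit equations
  have heq₀ : x₀ = digitVec (b + c - 2 * a) + A.mulVec x₁ := by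
    funext i
    rw [hA]
    fin_cases i <;>
      · simp [hx₀, hx₁, digitVec, Matrix.mulVec, dotProduct, Fin.sum_univ_two]
        push_cast
        linarith [ha, hb]
  have heq₁ : x₁ = digitVec (a - 2 * b - 2 * c) + A.mulVec x₀ := by
    funext i
    rw [hA]
    fin_cases i <;>
      · simp [hx₀, hx₁, digitVec, Matrix.mulVec, dotProduct, Fin.sum_univ_two]
        push_cast
        linarith [ha, hb]
  -- a general step lemma
  have step : ∀ (x y : Fin 2 → ℚ) (ν₀ : ℤ), x ∈ intSpan A →
      (∃ w : Fin 2 → ℤ, (fun i => ((w i : ℚ))) = y) →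
      0 ≤ ν₀ → ν₀ ≤ -b - 1 →
      x = digitVec ν₀ + A.mulVec y → Φ x = y := by
    intro x y ν₀ hxmem ⟨wy, hwy⟩ hν₀0 hν₀1 hxeq
    obtain ⟨ν, hν0, hν1, hx⟩ := hΦ x hxmem
    rw [habs] at hν1
    have hsubmem : y - Φ x ∈ intSpan A := by
      rw [← hwy]; exact cast_sub_mem_intSpan A wy (hΦmem x hxmem)
    have hAsub : A.mulVec (y - Φ x) = digitVec (ν - ν₀) := by
      rw [Matrix.mulVec_sub, ← hdigsub]
      have hcomb := hxeq.symm.trans hx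
      linear_combination hcomb
    have hdvd : b ∣ ν - ν₀ := key_dvd α β a b c hc0 ha hb hprim A hA (ν - ν₀) hsubmem hAsub
    have hzero : ν - ν₀ = 0 := by
      refine Int.eq_zero_of_abs_lt_dvd ((neg_dvd).mpr hdvd) ?_
      rw [abs_lt]
      constructor <;> omega
    have : A.mulVec (y - Φ x) = 0 := by
      rw [hAsub, hzero]
      funext i; fin_cases i <;> simp [digitVec]
    have := hAinj _ this
    have := sub_eq_zero.mp this
    exact this.symm
  have hΦ0 : Φ x₀ = x₁ := by
    refine step x₀ x₁ (b + c - 2 * a) mem₀ ⟨![a - 2 * c, c], hx₁cast⟩ (by omega) (by omega) heq₀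
  have hΦ1 : Φ x₁ = x₀ := by
    refine step x₁ x₀ (a - 2 * b - 2 * c) mem₁ ⟨![-(2 * a - c), -(2 * c)], hx₀cast⟩
      (by omega) (by omega) heq₁
  refine ⟨mem₀, 2, by norm_num, ?_⟩
  rw [show Φ^[2] x₀ = Φ (Φ x₀) from rfl, hΦ0, hΦ1]
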